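/- Let c₁(S) denote the number of pairs (s, g) with s ∈ S, g ∉ S, and g = s + 1 (equivalently, the number of boxes with hook length 1 in the Young diagram of S). For any numerical set S ≠ ℕ, c₁(S̃) = c₁(S) − 1. -/
import Mathlib


open Set

def IsNumericalSet (S : Set ℕ) : Prop := 0 ∈ S ∧ Sᶜ.Finite

def IsNumericalSemigroup (S : Set ℕ) : Prop :=
  IsNumericalSet S ∧ ∀ a ∈ S, ∀ b ∈ S, a + b ∈ S

/-- The associated set `A(S) = {s ∈ S : s + S ⊆ S}`. -/
def A (S : Set ℕ) : Set ℕ := {s ∈ S | ∀ t ∈ S, s + t ∈ S}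

/-- The Frobenius number: the largest gap of `S`. -/
noncomputable def F (S : Set ℕ) : ℕ := sSup Sᶜ

/-- The base: the largest element of `S` below `F S`. -/
noncomputable def B (S : Set ℕ) : ℕ := sSup {s | s ∈ S ∧ s < F S}

/-- The multiplicity: the smallest positive element of `S`. -/
noncomputable def m (S : Set ℕ) : ℕ := sInf {s | s ∈ S ∧ 0 < s}

/-- The complement numerical set (for `S ≠ ℕ`). -/
noncomputable def Stilde (S : Set ℕ) : Set ℕ :=
  {x | ∃ s ∈ S, s ≤ B S ∧ x = B S - s} ∪ {n | B S ≤ n}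

-- The complement operation, with the convention that the complement of ℕ is ℕ.
open Classical in
noncomputable def complOp (S : Set ℕ) : Set ℕ :=
  if S = Set.univ then Set.univ else Stilde S

/-- The genus: the number of gaps. -/
noncomputable def genus (S : Set ℕ) : ℕ := Sᶜ.ncard

/-- The number of boxes with hook length 1. -/
noncomputable def c1 (S : Set ℕ) : ℕ := {n | n ∈ S ∧ n + 1 ∉ S}.ncard

/-- An atom: a positive element not a sum of two positive elements. -/
def IsAtomOf (S : Set ℕ) (a : ℕ) : Prop :=
  a ∈ S ∧ 0 < a ∧ ¬ ∃ x ∈ S, ∃ y ∈ S, 0 < x ∧ 0 < y ∧ a = x + y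

/-- A small atom: an atom smaller than the Frobenius number. -/
def IsSmallAtom (S : Set ℕ) (a : ℕ) : Prop := IsAtomOf S a ∧ a < F S

/-- The embedding dimension: the number of atoms. -/
noncomputable def numAtoms (S : Set ℕ) : ℕ := {a | IsAtomOf S a}.ncard

/-- Maximal embedding dimension. -/
def MaxED (S : Set ℕ) : Prop := numAtoms S = m S


theorem c1_of_complement (S : Set ℕ) (hS : IsNumericalSet S) (hne : S ≠ Set.univ) :
    c1 (Stilde S) + 1 = c1 S := by
  classical
  obtain ⟨h0, hfin⟩ := hS
  have hcne : Sᶜ.Nonempty := by rw [Set.nonempty_compl]; exact hne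
  have hbdd : BddAbove Sᶜ := hfin.bddAbove
  have hFmem : F S ∈ Sᶜ := Nat.sSup_mem hcne hbdd
  have hFgt : ∀ n, F S < n → n ∈ S := by
    intro n hn
    by_contra h
    exact absurd (le_csSup hbdd h) (not_le.mpr hn)
  have hF0 : 0 < F S := Nat.pos_of_ne_zero (fun h => hFmem (h ▸ h0))
  have hBset_ne : ({s | s ∈ S ∧ s < F S} : Set ℕ).Nonempty := ⟨0, h0, hF0⟩
  have hBbdd : BddAbove {s | s ∈ S ∧ s < F S} := ⟨F S, fun x hx => hx.2.le⟩
  have hBmem : B S ∈ {s | s ∈ S ∧ s < F S} := Nat.sSup_mem hBset_ne hBbdd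
  have hBS : B S ∈ S := hBmem.1
  have hBF : B S < F S := hBmem.2
  have hBmax : ∀ s ∈ S, s < F S → s ≤ B S := fun s hs hsF => le_csSup hBbdd ⟨hs, hsF⟩
  have hB1 : B S + 1 ∉ S := by
    intro h
    rcases lt_or_eq_of_le (Nat.succ_le_of_lt hBF) with h1 | h1
    · exact absurd (hBmax _ h h1) (by omega)
    · exact hFmem (h1 ▸ h)
  set b := B S with hb
  have hStlt : ∀ n < b, (n ∈ Stilde S ↔ b - n ∈ S) := by
    intro n hn
    constructor
    · rintro (⟨s, hs, hsB, rfl⟩ | h)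
      · have he : b - (b - s) = s := by omega
        rw [he]; exact hs
      · exact absurd h (by simpa using hn.not_ge)
    · intro h
      exact Or.inl ⟨b - n, h, by omega, by omega⟩
  have hStge : ∀ n, b ≤ n → n ∈ Stilde S := fun n hn => Or.inr hn
  -- finset versions
  have hc1S : c1 S = ((Finset.range (b+1)).filter (fun n => n ∈ S ∧ n + 1 ∉ S)).card := by
    rw [c1, ← Set.ncard_coe_finset]
    congr 1
    ext n
    simp only [Finset.coe_filter, Finset.mem_range, Set.mem_setOf_eq]
    constructor
    · rintro ⟨h1, h2⟩
      refine ⟨?_, h1, h2⟩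
      have hn1 : n + 1 ≤ F S := by
        by_contra hc
        exact h2 (hFgt _ (by omega))
      have := hBmax n h1 (by omega)
      omega
    · tauto
  have hc1St : c1 (Stilde S) =
      ((Finset.range b).filter (fun n => n ∈ Stilde S ∧ n + 1 ∉ Stilde S)).card := by
    rw [c1, ← Set.ncard_coe_finset]
    congr 1
    ext n
    simp only [Finset.coe_filter, Finset.mem_range, Set.mem_setOf_eq]
    constructor
    · rintro ⟨h1, h2⟩
      have : n + 1 < b := by
        by_contra hc
        exact h2 (hStge _ (by omega))
      exact ⟨by omega, h1, h2⟩
    · tauto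
  -- telescoping identity
  have hsum : ((Finset.range b).filter (fun n => ¬ n ∈ S ∧ n + 1 ∈ S)).card
      = ((Finset.range b).filter (fun n => n ∈ S ∧ n + 1 ∉ S)).card := by
    have key : ∑ n ∈ Finset.range b,
        ((if n ∈ S ∧ n + 1 ∉ S then (1:ℤ) else 0) - (if ¬ n ∈ S ∧ n + 1 ∈ S then (1:ℤ) else 0))
        = ∑ n ∈ Finset.range b,
          ((if n ∈ S then (1:ℤ) else 0) - (if n + 1 ∈ S then (1:ℤ) else 0)) := by
      apply Finset.sum_congr rfl
      intro n _
      by_cases h1 : n ∈ S <;> by_cases h2 : n + 1 ∈ S <;> simp [h1, h2]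
    have tele : ∑ n ∈ Finset.range b,
        ((if n ∈ S then (1:ℤ) else 0) - (if n + 1 ∈ S then (1:ℤ) else 0)) = 0 := by
      have := Finset.sum_range_sub' (fun n => if n ∈ S then (1:ℤ) else 0) b
      rw [this]
      have hbS : b ∈ S := hBS
      simp [h0, hbS]
    rw [tele, Finset.sum_sub_distrib] at key
    rw [Finset.sum_boole, Finset.sum_boole] at key
    have : (((Finset.range b).filter (fun n => n ∈ S ∧ n + 1 ∉ S)).card : ℤ)
        = (((Finset.range b).filter (fun n => ¬ n ∈ S ∧ n + 1 ∈ S)).card : ℤ) := by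
      linarith
    exact_mod_cast this.symm
  -- split off n = b from c1 S
  have hsplit : ((Finset.range (b+1)).filter (fun n => n ∈ S ∧ n + 1 ∉ S)).card
      = ((Finset.range b).filter (fun n => n ∈ S ∧ n + 1 ∉ S)).card + 1 := by
    rw [Finset.range_add_one, Finset.filter_insert, if_pos ⟨hBS, hB1⟩,
      Finset.card_insert_of_notMem (by simp)]
  -- bijection between Stilde down-steps and S up-steps
  have hbij : ((Finset.range b).filter (fun n => n ∈ Stilde S ∧ n + 1 ∉ Stilde S)).card
      = ((Finset.range b).filter (fun n => ¬ n ∈ S ∧ n + 1 ∈ S)).card := by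
    apply Finset.card_bij (fun n _ => b - 1 - n)
    · intro n hn
      simp only [Finset.mem_filter, Finset.mem_range] at hn ⊢
      obtain ⟨hnb, h1, h2⟩ := hn
      have hn1b : n + 1 < b := by
        by_contra hc
        exact h2 (hStge _ (by omega))
      refine ⟨by omega, ?_, ?_⟩
      · intro hk
        have : n + 1 ∈ Stilde S := (hStlt (n+1) hn1b).mpr (by
          have : b - (n + 1) = b - 1 - n := by omega
          rw [this]; exact hk)
        exact h2 this
      · have := (hStlt n (by omega)).mp h1
        have he : b - 1 - n + 1 = b - n := by omega
        rw [he]; exact this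
    · intro a ha a' ha' hEq
      simp only [Finset.mem_filter, Finset.mem_range] at ha ha'
      have ha2 : a + 1 < b := by
        by_contra hc; exact ha.2.2 (hStge _ (by omega))
      have ha'2 : a' + 1 < b := by
        by_contra hc; exact ha'.2.2 (hStge _ (by omega))
      omega
    · intro k hk
      simp only [Finset.mem_filter, Finset.mem_range] at hk
      obtain ⟨hkb, hk1, hk2⟩ := hk
      have hk0 : 0 < k := by
        rcases Nat.eq_zero_or_pos k with h | h
        · exact absurd (h ▸ h0) hk1
        · exact h
      refine ⟨b - 1 - k, ?_, by omega⟩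
      simp only [Finset.mem_filter, Finset.mem_range]
      refine ⟨by omega, ?_, ?_⟩
      · apply (hStlt _ (by omega)).mpr
        have : b - (b - 1 - k) = k + 1 := by omega
        rw [this]; exact hk2
      · intro hmem
        have : b - 1 - k + 1 < b := by omega
        have := (hStlt _ this).mp hmem
        have he : b - (b - 1 - k + 1) = k := by omega
        rw [he] at this
        exact hk1 this
  rw [hc1S, hc1St, hsplit, hbij, hsum]
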